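/- Let V_n = a₁⋯aₙ be a word with pairwise distinct letters and define CS(V_n) = ⋃_{V_n = t·v} (t ⧢ v), the set of words obtained by cutting V_n into two parts and shuffling them. Then a word u of length n satisfies u·u ∈ ↑(V_n) if and only if u ∈ CS(V_n); moreover ↑(CS(V_n)) = √{↑(V_n)}. -/

import Mathlib

def ucl {α : Type*} (L : Set (List α)) : Set (List α) :=
  {x | ∃ y ∈ L, y.Sublist x}

/-- `IsShuffle t v u` holds iff `u` is an interleaving of `t` and `v`. -/
inductive IsShuffle {α : Type*} : List α → List α → List α → Prop
  | nil : IsShuffle [] [] []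
  | left {t v u : List α} (a : α) : IsShuffle t v u → IsShuffle (a :: t) v (a :: u)
  | right {t v u : List α} (a : α) : IsShuffle t v u → IsShuffle t (a :: v) (a :: u)

/-- `CS w`: the words obtained from `w` by one "cut and shuffle" move. -/
def CS {α : Type*} (w : List α) : Set (List α) :=
  {u | ∃ t v : List α, w = t ++ v ∧ IsShuffle t v u}

lemma shuffle_nil_left {α : Type*} (v : List α) : IsShuffle [] v v := by
  induction v with
  | nil => exact .nil
  | cons a v ih => exact .right a ih

lemma shuffle_nil_right {α : Type*} (t : List α) : IsShuffle t [] t := by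
  induction t with
  | nil => exact .nil
  | cons a t ih => exact .left a ih

lemma shuffle_sublist_left {α : Type*} {t v u : List α} (h : IsShuffle t v u) :
    t.Sublist u := by
  induction h with
  | nil => exact .slnil
  | left a _ ih => exact ih.cons₂ a
  | right a _ ih => exact ih.cons a

lemma shuffle_sublist_right {α : Type*} {t v u : List α} (h : IsShuffle t v u) :
    v.Sublist u := by
  induction h with
  | nil => exact .slnil
  | left a _ ih => exact ih.cons a
  | right a _ ih => exact ih.cons₂ a

lemma shuffle_length {α : Type*} {t v u : List α} (h : IsShuffle t v u) :
    u.length = t.length + v.length := by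
  induction h with
  | nil => simp
  | left a _ ih => simp [ih]; omega
  | right a _ ih => simp [ih]; omega

lemma merge_shuffle {α : Type*} {t v x : List α} (ht : t.Sublist x) (hv : v.Sublist x)
    (hd : t.Disjoint v) : ∃ u, IsShuffle t v u ∧ u.Sublist x := by
  induction x generalizing t v with
  | nil =>
    simp only [List.sublist_nil] at ht hv
    subst ht; subst hv
    exact ⟨[], .nil, .slnil⟩
  | cons a x ih =>
    cases ht with
    | cons _ ht' =>
      cases hv with
      | cons _ hv' =>
        obtain ⟨u, hu, hus⟩ := ih ht' hv' hd
        exact ⟨u, hu, hus.cons a⟩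
      | cons_cons _ hv' =>
        obtain ⟨u, hu, hus⟩ := ih ht' hv'
          (fun b hb hb' => hd hb (List.mem_cons_of_mem _ hb'))
        exact ⟨a :: u, .right a hu, hus.cons₂ a⟩
    | cons_cons _ ht' =>
      cases hv with
      | cons _ hv' =>
        obtain ⟨u, hu, hus⟩ := ih ht' hv'
          (fun b hb hb' => hd (List.mem_cons_of_mem _ hb) hb')
        exact ⟨a :: u, .left a hu, hus.cons₂ a⟩
      | cons_cons _ hv' =>
        exact absurd (hd (List.mem_cons_self) (List.mem_cons_self)) not_false

lemma sqrt_of_cs {α : Type*} {V u : List α} (h : u ∈ CS V) : V.Sublist (u ++ u) := by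
  obtain ⟨t, v, rfl, hs⟩ := h
  exact (shuffle_sublist_left hs).append (shuffle_sublist_right hs)

lemma cs_of_sqrt {α : Type*} {V x : List α} (hV : V.Nodup) (h : V.Sublist (x ++ x)) :
    ∃ u ∈ CS V, u.Sublist x := by
  rw [List.sublist_append_iff] at h
  obtain ⟨t, v, rfl, ht, hv⟩ := h
  rw [List.nodup_append] at hV
  obtain ⟨u, hu, hus⟩ := merge_shuffle ht hv (by intro a ha hb; exact hV.2.2 a ha a hb rfl)
  exact ⟨u, ⟨t, v, rfl, hu⟩, hus⟩

theorem cut_shuffle_sqrt {α : Type*} (V : List α) (hV : V.Nodup) :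
    (∀ u : List α, u.length = V.length →
      ((u ++ u) ∈ ucl {V} ↔ u ∈ CS V)) ∧
    ucl (CS V) = {x : List α | (x ++ x) ∈ ucl {V}} := by
  constructor
  · intro u hlen
    constructor
    · rintro ⟨y, rfl, hy⟩
      obtain ⟨u', hu', hsub⟩ := cs_of_sqrt hV hy
      have : u'.length = u.length := by
        obtain ⟨t, v, hV', hs⟩ := hu'
        have := shuffle_length hs
        rw [this, hlen, hV']; simp
      rw [← hsub.eq_of_length this]; exact hu'
    · intro h
      exact ⟨V, rfl, sqrt_of_cs h⟩
  · ext x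
    constructor
    · rintro ⟨u, hu, hux⟩
      exact ⟨V, rfl, (sqrt_of_cs hu).trans (hux.append hux)⟩
    · rintro ⟨y, rfl, hy⟩
      obtain ⟨u, hu, hsub⟩ := cs_of_sqrt hV hy
      exact ⟨u, hu, hsub⟩
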